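/- Let n ≥ 1 be an integer, let a < b be real numbers, and let f ∈ 𝒟ⁿ([a,b]) satisfy f^{(n)}(t) ≥ n! for every t ∈ (a,b). Then there exists a monic real polynomial P of degree n, all of whose roots are real and lie in [a,b], such that |f(x)| ≥ |P(x)| for every x ∈ [a,b]. -/

import Mathlib

open Set Polynomial Nat MeasureTheory ENNReal

/-- `fd 0` belongs to `𝒟ⁿ([a,b])`, with `fd k` its `k`-th derivative: `fd k` exists and is
continuous on `[a,b]` for `0 ≤ k ≤ n-1`, and `fd n` is the derivative of `fd (n-1)` on `(a,b)`. -/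
def IsDn (n : ℕ) (a b : ℝ) (fd : ℕ → ℝ → ℝ) : Prop :=
  (∀ k, k + 1 < n → ∀ x ∈ Set.Icc a b, HasDerivWithinAt (fd k) (fd (k + 1) x) (Set.Icc a b) x) ∧
  ContinuousOn (fd (n - 1)) (Set.Icc a b) ∧
  (∀ x ∈ Set.Ioo a b, HasDerivAt (fd (n - 1)) (fd n x) x)

/-- `m_n(f) = inf_{a<t<b} |f^{(n)}(t)|`. -/
noncomputable def mIoo (n : ℕ) (a b : ℝ) (fd : ℕ → ℝ → ℝ) : ℝ :=
  sInf ((fun t => |fd n t|) '' Set.Ioo a b)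

/-- `‖f‖_{p,[a,b]}` for `0 < p < ∞`. -/
noncomputable def Lp (p a b : ℝ) (f : ℝ → ℝ) : ℝ :=
  (∫ t in a..b, |f t| ^ p) ^ (1 / p)

/-- `‖f‖_{∞,[a,b]}`. -/
noncomputable def Lsup (a b : ℝ) (f : ℝ → ℝ) : ℝ :=
  sSup ((fun t => |f t|) '' Set.Icc a b)

/-- `‖f‖_{p,[a,b]}` for `0 < p ≤ ∞`. -/
noncomputable def pnorm (p : ℝ≥0∞) (a b : ℝ) (f : ℝ → ℝ) : ℝ :=
  if p = ⊤ then Lsup a b f else Lp p.toReal a b f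

/-- `D**(n,p,[a,b])`, `p` finite. -/
noncomputable def Dstar (n : ℕ) (p a b : ℝ) : ℝ :=
  sInf { c | ∃ Q : Polynomial ℝ, Q.Monic ∧ Q.natDegree = n ∧ c = Lp p a b (fun x => Q.eval x) }

/-- `D**(n,∞,[a,b])`. -/
noncomputable def DstarInf (n : ℕ) (a b : ℝ) : ℝ :=
  sInf { c | ∃ Q : Polynomial ℝ, Q.Monic ∧ Q.natDegree = n ∧ c = Lsup a b (fun x => Q.eval x) }

/-- `C(n,p)`, `p` finite. -/
noncomputable def Cnp (n : ℕ) (p : ℝ) : ℝ :=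
  sSup { c | ∃ fd : ℕ → ℝ → ℝ, IsDn n 0 1 fd ∧ (∃ x ∈ Set.Icc (0:ℝ) 1, fd 0 x ≠ 0) ∧
    c = mIoo n 0 1 fd / Lp p 0 1 (fd 0) }

/-- `C(n,∞)`. -/
noncomputable def CnpInf (n : ℕ) : ℝ :=
  sSup { c | ∃ fd : ℕ → ℝ → ℝ, IsDn n 0 1 fd ∧ (∃ x ∈ Set.Icc (0:ℝ) 1, fd 0 x ≠ 0) ∧
    c = mIoo n 0 1 fd / Lsup 0 1 (fd 0) }

section auxdev
open Filter intervalIntegral Topology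

private lemma seg_mem {a b z x : ℝ} (hz : z ∈ Set.Icc a b) (hx : x ∈ Set.Icc a b) {t : ℝ}
    (ht : t ∈ Set.Icc (0:ℝ) 1) : z + t * (x - z) ∈ Set.Icc a b := by
  obtain ⟨hz1, hz2⟩ := hz; obtain ⟨hx1, hx2⟩ := hx; obtain ⟨ht0, ht1⟩ := ht
  constructor <;> nlinarith [mul_nonneg ht0 (sub_nonneg.2 hx1),
    mul_nonneg (sub_nonneg.2 ht1) (sub_nonneg.2 hz1),
    mul_nonneg ht0 (sub_nonneg.2 hx2), mul_nonneg (sub_nonneg.2 ht1) (sub_nonneg.2 hz2)]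

private lemma uIcc_sub {a b z x : ℝ} (hz : z ∈ Set.Icc a b) (hx : x ∈ Set.Icc a b) :
    Set.uIcc x z ⊆ Set.Icc a b := by
  intro y hy
  rw [Set.mem_uIcc] at hy
  obtain ⟨hz1, hz2⟩ := hz; obtain ⟨hx1, hx2⟩ := hx
  constructor <;> rcases hy with ⟨h1, h2⟩ | ⟨h1, h2⟩ <;> linarith

private lemma mono_aux {a b c : ℝ} {F G : ℝ → ℝ}
    (hF : ∀ x ∈ Set.Icc a b, HasDerivWithinAt F (G x) (Set.Icc a b) x)
    (hG : ∀ x ∈ Set.Icc a b, c ≤ G x) :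
    ∀ u ∈ Set.Icc a b, ∀ v ∈ Set.Icc a b, u ≤ v → c * (v - u) ≤ F v - F u := by
  intro u hu v hv huv
  have hmul : ∀ x : ℝ, HasDerivAt (fun y : ℝ => c * y) c x := by
    intro x; simpa using (hasDerivAt_id x).const_mul c
  have h : MonotoneOn (fun x => F x - c * x) (Set.Icc a b) := by
    apply monotoneOn_of_hasDerivWithinAt_nonneg (f' := fun x => G x - c) (convex_Icc a b)
    · exact fun x hx => ((hF x hx).continuousWithinAt).sub ((hmul x).continuousAt.continuousWithinAt)
    · rw [interior_Icc]
      intro x hx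
      exact ((hF x (Set.Ioo_subset_Icc_self hx)).mono Set.Ioo_subset_Icc_self).sub
        ((hmul x).hasDerivWithinAt)
    · rw [interior_Icc]
      intro x hx
      have := hG x (Set.Ioo_subset_Icc_self hx); linarith
  have := h hu hv huv
  simp only at this
  linarith

private lemma min_abs_fact {f : ℝ → ℝ} {a b z : ℝ} (hf : ContinuousOn f (Set.Icc a b))
    (hz : z ∈ Set.Icc a b) (hmin : ∀ x ∈ Set.Icc a b, |f z| ≤ |f x|) :
    ∀ x ∈ Set.Icc a b, |f x - f z| ≤ |f x| := by
  have key : ∀ g : ℝ → ℝ, ContinuousOn g (Set.Icc a b) → (∀ x ∈ Set.Icc a b, |g z| ≤ |g x|) →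
      ∀ x ∈ Set.Icc a b, 0 < g z → g z ≤ g x := by
    intro g hg hgmin x hx h
    by_contra hc
    push_neg at hc
    have hgx : g x < 0 := by
      rcases le_or_gt 0 (g x) with h1 | h1
      · have := hgmin x hx
        rw [abs_of_pos h, abs_of_nonneg h1] at this; linarith
      · exact h1
    have h0 : (0:ℝ) ∈ Set.uIcc (g x) (g z) := by
      rw [Set.mem_uIcc]; left; exact ⟨hgx.le, h.le⟩
    obtain ⟨y, hy, hfy⟩ := intermediate_value_uIcc (hg.mono (uIcc_sub hz hx)) h0
    have := hgmin y (uIcc_sub hz hx hy)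
    rw [hfy, abs_of_pos h] at this
    simp at this; linarith
  intro x hx
  rcases lt_trichotomy (f z) 0 with h | h | h
  · have h2 : -f z ≤ -f x := by
      have := key (fun y => -f y) hf.neg (by intro y hy; simpa using hmin y hy) x hx
        (by simpa using h)
      simpa using this
    rw [abs_of_nonpos (by linarith), abs_of_neg (by linarith : f x < 0)]; linarith
  · simp [h]
  · have h2 := key f hf hmin x hx h
    rw [abs_of_nonneg (by linarith), abs_of_pos (by linarith : 0 < f x)]; linarith

noncomputable def gdAux (fd : ℕ → ℝ → ℝ) (z : ℝ) : ℕ → ℝ → ℝ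
  | 0 => fun x => if x = z then fd 1 z else (fd 0 x - fd 0 z) / (x - z)
  | (k+1) => fun x => if x = z then fd (k+2) z / (k+2) else
      (fd (k+1) x - (k+1) * gdAux fd z k x) / (x - z)

lemma gdAux_zero (fd : ℕ → ℝ → ℝ) (z x : ℝ) :
    gdAux fd z 0 x = if x = z then fd 1 z else (fd 0 x - fd 0 z) / (x - z) := rfl

lemma gdAux_succ (fd : ℕ → ℝ → ℝ) (z : ℝ) (k : ℕ) (x : ℝ) :
    gdAux fd z (k+1) x = if x = z then fd (k+2) z / (k+2) else
      (fd (k+1) x - (k+1) * gdAux fd z k x) / (x - z) := rfl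

lemma gdAux_at_z (fd : ℕ → ℝ → ℝ) (z : ℝ) (k : ℕ) :
    gdAux fd z k z = fd (k+1) z / (k+1) := by
  cases k with
  | zero => simp [gdAux_zero]
  | succ k => rw [gdAux_succ, if_pos rfl]; push_cast; ring_nf

-- ∫ t^k * C over [0,1]
lemma mini1 (C : ℝ) (k : ℕ) : ∫ t in (0:ℝ)..1, t^k * C = C / (k+1) := by
  rw [intervalIntegral.integral_mul_const, integral_pow]
  push_cast
  field_simp
  simp

private lemma seg_mem' {a b z x : ℝ} (hz : z ∈ Set.Icc a b) (hx : x ∈ Set.Icc a b) {t : ℝ}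
    (ht : t ∈ Set.Icc (0:ℝ) 1) : z + t * (x - z) ∈ Set.Icc a b := by
  obtain ⟨hz1, hz2⟩ := hz; obtain ⟨hx1, hx2⟩ := hx; obtain ⟨ht0, ht1⟩ := ht
  constructor <;> nlinarith [mul_nonneg ht0 (sub_nonneg.2 hx1),
    mul_nonneg (sub_nonneg.2 ht1) (sub_nonneg.2 hz1),
    mul_nonneg ht0 (sub_nonneg.2 hx2), mul_nonneg (sub_nonneg.2 ht1) (sub_nonneg.2 hz2)]

section ftc
variable {a b z x : ℝ} {F G : ℝ → ℝ}
  (hz : z ∈ Set.Icc a b) (hx : x ∈ Set.Icc a b)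
  (hF : ∀ y ∈ Set.Icc a b, HasDerivWithinAt F (G y) (Set.Icc a b) y)
  (hGc : ContinuousOn G (Set.Icc a b))

private lemma psi_cont : ContinuousOn (fun t : ℝ => z + t * (x - z)) (Set.Icc 0 1) :=
  (continuous_const.add (continuous_id.mul continuous_const)).continuousOn

include hz hx hF in
private lemma phi_deriv : ∀ t ∈ Set.Icc (0:ℝ) 1,
    HasDerivWithinAt (fun t => F (z + t * (x - z))) ((x - z) * G (z + t * (x - z)))
      (Set.Icc 0 1) t := by
  intro t ht
  have hψd : HasDerivWithinAt (fun t : ℝ => z + t * (x - z)) (x - z) (Set.Icc 0 1) t := by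
    simpa using (((hasDerivAt_id t).mul_const (x - z)).const_add z).hasDerivWithinAt
  have := (hF _ (seg_mem' hz hx ht)).comp t hψd (fun s hs => seg_mem' hz hx hs)
  simpa [mul_comm, Function.comp_def] using this

include hz hx hF hGc in
private lemma ftc0 :
    ∫ t in (0:ℝ)..1, (x - z) * G (z + t * (x - z)) = F x - F z := by
  have hFc : ContinuousOn F (Set.Icc a b) := fun y hy => (hF y hy).continuousWithinAt
  have h := intervalIntegral.integral_eq_sub_of_hasDeriv_right_of_le (zero_le_one)
    (hFc.comp psi_cont (fun s hs => seg_mem' hz hx hs))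
    (fun t ht => ((phi_deriv hz hx hF t (Set.Ioo_subset_Icc_self ht)).mono_of_mem_nhdsWithin
      (Icc_mem_nhdsGT_of_mem ⟨ht.1.le, ht.2⟩)))
    (((continuous_const.continuousOn).mul (hGc.comp psi_cont (fun s hs => seg_mem' hz hx hs))).intervalIntegrable_of_Icc zero_le_one)
  simpa using h

include hz hx hF hGc in
private lemma ftcS (k : ℕ) :
    ∫ t in (0:ℝ)..1, (((k:ℝ)+1) * t^k * F (z + t * (x - z))
      + t^(k+1) * ((x - z) * G (z + t * (x - z)))) = F x := by
  have hFc : ContinuousOn F (Set.Icc a b) := fun y hy => (hF y hy).continuousWithinAt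
  have hφd : ∀ t ∈ Set.Icc (0:ℝ) 1,
      HasDerivWithinAt (fun t => t^(k+1) * F (z + t * (x - z)))
        (((k:ℝ)+1) * t^k * F (z + t * (x - z)) + t^(k+1) * ((x - z) * G (z + t * (x - z))))
        (Set.Icc 0 1) t := by
    intro t ht
    have h1 : HasDerivWithinAt (fun t : ℝ => t^(k+1)) (((k:ℝ)+1) * t^k) (Set.Icc 0 1) t := by
      simpa using (hasDerivAt_pow (k+1) t).hasDerivWithinAt
    exact h1.mul (phi_deriv hz hx hF t ht)
  have h := intervalIntegral.integral_eq_sub_of_hasDeriv_right_of_le (zero_le_one)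
    ((continuous_pow (k+1)).continuousOn.mul (hFc.comp psi_cont (fun s hs => seg_mem' hz hx hs)))
    (fun t ht => ((hφd t (Set.Ioo_subset_Icc_self ht)).mono_of_mem_nhdsWithin
      (Icc_mem_nhdsGT_of_mem ⟨ht.1.le, ht.2⟩)))
    ((((continuous_const.mul (continuous_pow k)).continuousOn.mul
        (hFc.comp psi_cont (fun s hs => seg_mem' hz hx hs))).add
      ((continuous_pow (k+1)).continuousOn.mul
        ((continuous_const.continuousOn).mul (hGc.comp psi_cont (fun s hs => seg_mem' hz hx hs))))).intervalIntegrable_of_Icc zero_le_one)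
  rw [h]
  simp only [Pi.mul_apply, Function.comp_apply]
  have he : z + 1 * (x - z) = x := by ring
  rw [he]
  norm_num
end ftc

private lemma keyP : ∀ (m : ℕ) (a b : ℝ), a < b → ∀ fd : ℕ → ℝ → ℝ,
    (∀ k < m, ∀ x ∈ Set.Icc a b, HasDerivWithinAt (fd k) (fd (k+1) x) (Set.Icc a b) x) →
    (∀ x ∈ Set.Icc a b, (m ! : ℝ) ≤ fd m x) →
    ∃ r : Fin m → ℝ, (∀ i, r i ∈ Set.Icc a b) ∧
      ∀ x ∈ Set.Icc a b, |∏ i, (x - r i)| ≤ |fd 0 x| := by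
  intro m
  induction m with
  | zero =>
    intro a b hab fd _ hb
    refine ⟨Fin.elim0, fun i => i.elim0, fun x hx => ?_⟩
    have h1 := hb x hx
    simp only [Nat.factorial_zero, Nat.cast_one] at h1
    calc |∏ i : Fin 0, (x - Fin.elim0 i)| = 1 := by simp
    _ ≤ fd 0 x := h1
    _ ≤ |fd 0 x| := le_abs_self _
  | succ m ih =>
    intro a b hab fd hd hb
    have hcont : ∀ k, k ≤ m → ContinuousOn (fd k) (Set.Icc a b) := by
      intro k hk
      exact fun x hx => (hd k (by omega) x hx).continuousWithinAt
    obtain ⟨z, hzmem, hzmin'⟩ := (isCompact_Icc (a := a) (b := b)).exists_isMinOn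
      (Set.nonempty_Icc.2 hab.le) ((hcont 0 (by omega)).abs)
    have hzmin : ∀ x ∈ Set.Icc a b, |fd 0 z| ≤ |fd 0 x| := fun x hx => hzmin' hx
    have hψc : ∀ x : ℝ, Continuous (fun t : ℝ => z + t * (x - z)) := by
      intro x; exact continuous_const.add (continuous_id.mul continuous_const)
    have hcomp : ∀ (j : ℕ), j ≤ m → ∀ x ∈ Set.Icc a b,
        ContinuousOn (fun t : ℝ => fd j (z + t * (x - z))) (Set.Icc 0 1) := by
      intro j hj x hx
      exact (hcont j hj).comp (hψc x).continuousOn (fun s hs => seg_mem hzmem hx hs)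
    -- integral representation
    have hrep : ∀ k, k + 1 ≤ m → ∀ x ∈ Set.Icc a b,
        gdAux fd z k x = ∫ t in (0:ℝ)..1, t^k * fd (k+1) (z + t * (x - z)) := by
      intro k
      induction k with
      | zero =>
        intro hk x hx
        by_cases hxz : x = z
        · subst hxz
          rw [gdAux_at_z]
          simp only [sub_self, mul_zero, add_zero, pow_zero, one_mul]
          rw [intervalIntegral.integral_const]
          norm_num
        · rw [gdAux_zero, if_neg hxz]
          have h0 := ftc0 hzmem hx (F := fd 0) (G := fd 1)
            (fun y hy => hd 0 (by omega) y hy) (hcont 1 (by omega))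
          rw [intervalIntegral.integral_const_mul] at h0
          simp only [pow_zero, one_mul]
          rw [eq_comm, ← h0, mul_div_cancel_left₀ _ (sub_ne_zero_of_ne hxz)]
      | succ k ihk =>
        intro hk x hx
        by_cases hxz : x = z
        · subst hxz
          rw [gdAux_at_z]
          simp only [sub_self, mul_zero, add_zero]
          rw [mini1]
        · rw [gdAux_succ, if_neg hxz]
          have hS := ftcS hzmem hx (F := fd (k+1)) (G := fd (k+2))
            (fun y hy => hd (k+1) (by omega) y hy) (hcont (k+2) (by omega)) k
          have hint1 : IntervalIntegrable
              (fun t => ((k:ℝ)+1) * t^k * fd (k+1) (z + t * (x - z))) MeasureTheory.volume 0 1 := by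
            apply ContinuousOn.intervalIntegrable_of_Icc zero_le_one
            exact ((continuous_const.mul (continuous_pow k)).continuousOn).mul
              (hcomp (k+1) (by omega) x hx)
          have hint2 : IntervalIntegrable
              (fun t => t^(k+1) * ((x - z) * fd (k+2) (z + t * (x - z)))) MeasureTheory.volume 0 1 := by
            apply ContinuousOn.intervalIntegrable_of_Icc zero_le_one
            exact ((continuous_pow (k+1)).continuousOn).mul
              (continuous_const.continuousOn.mul (hcomp (k+2) (by omega) x hx))
          rw [intervalIntegral.integral_add hint1 hint2] at hS
          have he1 : (fun t => ((k:ℝ)+1) * t^k * fd (k+1) (z + t * (x - z)))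
              = fun t => ((k:ℝ)+1) * (t^k * fd (k+1) (z + t * (x - z))) := by
            funext t; ring
          have he2 : (fun t => t^(k+1) * ((x - z) * fd (k+2) (z + t * (x - z))))
              = fun t => (x - z) * (t^(k+1) * fd (k+2) (z + t * (x - z))) := by
            funext t; ring
          rw [he1, he2, intervalIntegral.integral_const_mul, intervalIntegral.integral_const_mul,
            ← ihk (by omega) x hx] at hS
          rw [eq_comm, eq_div_iff (sub_ne_zero_of_ne hxz)]
          push_cast
          linarith
    -- derivative at the diagonal point z
    have hdiag : ∀ k, k + 1 ≤ m →
        HasDerivWithinAt (gdAux fd z k) (gdAux fd z (k+1) z) (Set.Icc a b) z := by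
      intro k hk
      have hder := hd (k+1) (by omega) z hzmem
      rw [hasDerivWithinAt_iff_isLittleO] at hder ⊢
      rw [Asymptotics.isLittleO_iff] at hder ⊢
      intro c hc
      have hev := hder hc
      rw [Metric.nhdsWithin_basis_ball.eventually_iff] at hev ⊢
      obtain ⟨δ, hδ, hball⟩ := hev
      refine ⟨δ, hδ, fun x' hx' => ?_⟩
      obtain ⟨hx'd, hx'm⟩ := hx'
      rw [Metric.mem_ball] at hx'd
      -- the three integrands are integrable
      have hint1 : IntervalIntegrable
          (fun t => t^k * fd (k+1) (z + t * (x' - z))) MeasureTheory.volume 0 1 :=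
        ContinuousOn.intervalIntegrable_of_Icc zero_le_one
          (((continuous_pow k).continuousOn).mul (hcomp (k+1) (by omega) x' hx'm))
      have hint2 : IntervalIntegrable
          (fun t : ℝ => t^k * fd (k+1) z) MeasureTheory.volume 0 1 :=
        (((continuous_pow k).mul continuous_const).intervalIntegrable 0 1)
      have hint3 : IntervalIntegrable
          (fun t : ℝ => t^k * (t * (x' - z) * fd (k+2) z)) MeasureTheory.volume 0 1 :=
        (((continuous_pow k).mul ((continuous_id.mul continuous_const).mul
          continuous_const)).intervalIntegrable 0 1)
      have hident : gdAux fd z k x' - gdAux fd z k z - (x' - z) * (fd (k+2) z / ((k:ℝ)+2)) =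
          ∫ t in (0:ℝ)..1, t^k * (fd (k+1) (z + t * (x' - z)) - fd (k+1) z
            - t * (x' - z) * fd (k+2) z) := by
        have he : (fun t : ℝ => t^k * (fd (k+1) (z + t * (x' - z)) - fd (k+1) z
            - t * (x' - z) * fd (k+2) z))
            = fun t : ℝ => t^k * fd (k+1) (z + t * (x' - z)) - t^k * fd (k+1) z
              - t^k * (t * (x' - z) * fd (k+2) z) := by
          funext t; ring
        rw [he, intervalIntegral.integral_sub (hint1.sub hint2) hint3,
          intervalIntegral.integral_sub hint1 hint2, mini1]
        have h3 : ∫ t in (0:ℝ)..1, t^k * (t * (x' - z) * fd (k+2) z)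
            = ((x' - z) * fd (k+2) z) / ((k:ℝ)+2) := by
          have he2 : (fun t : ℝ => t^k * (t * (x' - z) * fd (k+2) z))
              = fun t : ℝ => t^(k+1) * ((x' - z) * fd (k+2) z) := by
            funext t; ring
          rw [he2, mini1]
          push_cast; ring
        rw [h3, ← hrep k hk x' hx'm, gdAux_at_z]
        push_cast; ring
      have hval : gdAux fd z (k+1) z = fd (k+2) z / ((k:ℝ)+2) := by
        rw [gdAux_at_z]
        congr 1
        push_cast; ring
      have hgoal_eq : gdAux fd z k x' - gdAux fd z k z - (x' - z) • gdAux fd z (k+1) z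
          = ∫ t in (0:ℝ)..1, t^k * (fd (k+1) (z + t * (x' - z)) - fd (k+1) z
            - t * (x' - z) * fd (k+2) z) := by
        rw [smul_eq_mul, hval]; exact hident
      rw [hgoal_eq]
      have hbound : ∀ t ∈ Set.uIoc (0:ℝ) 1,
          ‖t^k * (fd (k+1) (z + t * (x' - z)) - fd (k+1) z - t * (x' - z) * fd (k+2) z)‖
            ≤ c * |x' - z| := by
        intro t ht
        rw [Set.uIoc_of_le zero_le_one] at ht
        obtain ⟨ht0, ht1⟩ := ht
        have htm : t ∈ Set.Icc (0:ℝ) 1 := ⟨ht0.le, ht1⟩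
        have hu : z + t * (x' - z) ∈ Set.Icc a b := seg_mem hzmem hx'm htm
        have hud : z + t * (x' - z) ∈ Metric.ball z δ := by
          rw [Metric.mem_ball, Real.dist_eq]
          have : |z + t * (x' - z) - z| = t * |x' - z| := by
            rw [add_sub_cancel_left, abs_mul, abs_of_pos ht0]
          rw [this]
          calc t * |x' - z| ≤ 1 * |x' - z| := by
                apply mul_le_mul_of_nonneg_right ht1 (abs_nonneg _)
          _ = |x' - z| := one_mul _
          _ < δ := by rw [← Real.dist_eq]; exact hx'd
        have hb2 := hball ⟨hud, hu⟩
        simp only [smul_eq_mul, Real.norm_eq_abs] at hb2 ⊢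
        have harg : z + t * (x' - z) - z = t * (x' - z) := by ring
        rw [harg] at hb2
        have h1 : |t^k| ≤ 1 := by
          rw [abs_of_nonneg (pow_nonneg ht0.le k)]
          exact pow_le_one₀ ht0.le ht1
        calc |t^k * (fd (k+1) (z + t * (x' - z)) - fd (k+1) z - t * (x' - z) * fd (k+2) z)|
            = |t^k| * |fd (k+1) (z + t * (x' - z)) - fd (k+1) z - t * (x' - z) * fd (k+2) z| :=
              abs_mul _ _
        _ ≤ 1 * (c * |t * (x' - z)|) := by
              apply mul_le_mul h1 hb2 (abs_nonneg _) zero_le_one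
        _ ≤ c * |x' - z| := by
              rw [one_mul, abs_mul, abs_of_pos ht0]
              calc c * (t * |x' - z|) ≤ c * (1 * |x' - z|) := by
                    apply mul_le_mul_of_nonneg_left _ hc.le
                    apply mul_le_mul_of_nonneg_right ht1 (abs_nonneg _)
              _ = c * |x' - z| := by ring
      have := intervalIntegral.norm_integral_le_of_norm_le_const hbound
      simp only [Real.norm_eq_abs] at this ⊢
      calc |∫ t in (0:ℝ)..1, t^k * (fd (k+1) (z + t * (x' - z)) - fd (k+1) z
            - t * (x' - z) * fd (k+2) z)| ≤ c * |x' - z| * |1 - 0| := this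
      _ = c * |x' - z| := by norm_num
    -- the derivative chain for gdAux
    have hF1 : ∀ k, k < m → ∀ x ∈ Set.Icc a b,
        HasDerivWithinAt (gdAux fd z k) (gdAux fd z (k+1) x) (Set.Icc a b) x := by
      intro k
      induction k with
      | zero =>
        intro hk x hx
        by_cases hxz : x = z
        · subst hxz; exact hdiag 0 (by omega)
        · have hformula : HasDerivWithinAt (fun w => (fd 0 w - fd 0 z) * (w - z)⁻¹)
              (fd 1 x * (x - z)⁻¹ + (fd 0 x - fd 0 z) * (-1 / (x - z)^2)) (Set.Icc a b) x :=
            ((hd 0 (by omega) x hx).sub_const (fd 0 z)).mul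
              ((((hasDerivAt_id x).sub_const z).inv (sub_ne_zero_of_ne hxz)).hasDerivWithinAt)
          have heq : gdAux fd z 0 =ᶠ[nhdsWithin x (Set.Icc a b)]
              (fun w => (fd 0 w - fd 0 z) * (w - z)⁻¹) := by
            apply Filter.EventuallyEq.filter_mono _ nhdsWithin_le_nhds
            filter_upwards [eventually_ne_nhds hxz] with w hw
            rw [gdAux_zero, if_neg hw, div_eq_mul_inv]
          have hval : gdAux fd z 0 x = (fd 0 x - fd 0 z) * (x - z)⁻¹ := by
            rw [gdAux_zero, if_neg hxz, div_eq_mul_inv]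
          have hres := hformula.congr_of_eventuallyEq heq hval
          refine hres.congr_deriv ?_
          rw [gdAux_succ, if_neg hxz, gdAux_zero, if_neg hxz]
          field_simp [sub_ne_zero_of_ne hxz]
          ring
      | succ k ihk =>
        intro hk x hx
        by_cases hxz : x = z
        · subst hxz; exact hdiag (k+1) (by omega)
        · have hgdk := ihk (by omega) x hx
          have hformula : HasDerivWithinAt
              (fun w => (fd (k+1) w - ((k:ℝ)+1) * gdAux fd z k w) * (w - z)⁻¹)
              ((fd (k+2) x - ((k:ℝ)+1) * gdAux fd z (k+1) x) * (x - z)⁻¹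
                + (fd (k+1) x - ((k:ℝ)+1) * gdAux fd z k x) * (-1 / (x - z)^2))
              (Set.Icc a b) x :=
            ((hd (k+1) (by omega) x hx).sub (hgdk.const_mul _)).mul
              ((((hasDerivAt_id x).sub_const z).inv (sub_ne_zero_of_ne hxz)).hasDerivWithinAt)
          have heq : gdAux fd z (k+1) =ᶠ[nhdsWithin x (Set.Icc a b)]
              (fun w => (fd (k+1) w - ((k:ℝ)+1) * gdAux fd z k w) * (w - z)⁻¹) := by
            apply Filter.EventuallyEq.filter_mono _ nhdsWithin_le_nhds
            filter_upwards [eventually_ne_nhds hxz] with w hw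
            rw [gdAux_succ, if_neg hw, div_eq_mul_inv]
          have hval : gdAux fd z (k+1) x
              = (fd (k+1) x - ((k:ℝ)+1) * gdAux fd z k x) * (x - z)⁻¹ := by
            rw [gdAux_succ, if_neg hxz, div_eq_mul_inv]
          have hres := hformula.congr_of_eventuallyEq heq hval
          refine hres.congr_deriv ?_
          symm
          have e1 : fd (k+1) x - ((k:ℝ)+1) * gdAux fd z k x = (x - z) * gdAux fd z (k+1) x := by
            rw [gdAux_succ, if_neg hxz, ← mul_div_assoc, mul_div_cancel_left₀ _ (sub_ne_zero_of_ne hxz)]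
          rw [gdAux_succ, if_neg hxz, e1]
          push_cast
          field_simp [sub_ne_zero_of_ne hxz]
          ring
    -- monotonicity of the top derivative
    have hmono := mono_aux (a := a) (b := b) (F := fd m) (G := fd (m+1))
      (fun x hx => hd m (by omega) x hx) hb
    -- factorial lower bound for the top gdAux
    have hF2 : ∀ x ∈ Set.Icc a b, ((m)! : ℝ) ≤ gdAux fd z m x := by
      intro x hx
      by_cases hxz : x = z
      · rw [hxz, gdAux_at_z, le_div_iff₀ (by positivity : (0:ℝ) < (m:ℝ)+1)]
        calc ((m)! : ℝ) * ((m:ℝ)+1) = (((m+1))! : ℝ) := by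
              rw [Nat.factorial_succ]; push_cast; ring
        _ ≤ fd (m+1) z := hb z hzmem
      · rcases Nat.eq_zero_or_pos m with hm0 | hmpos
        · subst hm0
          rw [gdAux_zero, if_neg hxz]
          norm_num
          rcases lt_or_gt_of_ne (fun h : x = z => hxz h) with hlt | hlt
          · rw [le_div_iff_of_neg (by linarith : x - z < 0)]
            have h := hmono x hx z hzmem hlt.le
            norm_num at h
            linarith
          · rw [le_div_iff₀ (by linarith : (0:ℝ) < x - z)]
            have h := hmono z hzmem x hx hlt.le
            norm_num at h
            linarith
        · obtain ⟨m', rfl⟩ : ∃ m', m = m' + 1 := ⟨m - 1, by omega⟩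
          have hrepm := hrep m' (by omega) x hx
          have h1 : ((m':ℝ)+1) ≠ 0 := by positivity
          have h2 : ((m':ℝ)+2) ≠ 0 := by positivity
          have hintpow : ∀ j : ℕ, IntervalIntegrable (fun t : ℝ => t^j)
              MeasureTheory.volume 0 1 := fun j => (continuous_pow j).intervalIntegrable 0 1
          have hint1 : IntervalIntegrable
              (fun t => t^m' * fd (m'+1) (z + t * (x - z))) MeasureTheory.volume 0 1 :=
            ContinuousOn.intervalIntegrable_of_Icc zero_le_one
              (((continuous_pow m').continuousOn).mul (hcomp (m'+1) (by omega) x hx))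
          have hintC : IntervalIntegrable
              (fun t : ℝ => t^m' * fd (m'+1) x) MeasureTheory.volume 0 1 :=
            ((continuous_pow m').mul continuous_const).intervalIntegrable 0 1
          have hint_hi : IntervalIntegrable
              (fun t => t^m' * (fd (m'+1) x - fd (m'+1) (z + t * (x - z))))
              MeasureTheory.volume 0 1 := by
            have he : (fun t => t^m' * (fd (m'+1) x - fd (m'+1) (z + t * (x - z))))
                = fun t => t^m' * fd (m'+1) x - t^m' * fd (m'+1) (z + t * (x - z)) := by
              funext t; ring
            rw [he]; exact hintC.sub hint1
          have hint_lo : IntervalIntegrable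
              (fun t : ℝ => t^m' * ((((m'+2))! : ℝ) * ((1-t)*(x-z))))
              MeasureTheory.volume 0 1 :=
            ((continuous_pow m').mul (continuous_const.mul
              (((continuous_const.sub continuous_id).mul continuous_const)))).intervalIntegrable 0 1
          have hLoval : ∫ t in (0:ℝ)..1, t^m' * ((((m'+2))! : ℝ) * ((1-t)*(x-z)))
              = (((m'+1))! : ℝ) * (x - z) / ((m':ℝ)+1) := by
            have he : (fun t : ℝ => t^m' * ((((m'+2))! : ℝ) * ((1-t)*(x-z))))
                = fun t : ℝ => ((((m'+2))! : ℝ) * (x-z)) * (t^m' - t^(m'+1)) := by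
              funext t; ring
            rw [he, intervalIntegral.integral_const_mul,
              intervalIntegral.integral_sub (hintpow m') (hintpow (m'+1)),
              integral_pow, integral_pow]
            push_cast [Nat.factorial_succ]
            field_simp
            ring
          have hsplit : fd (m'+1) x - ((m':ℝ)+1) * gdAux fd z m' x
              = ((m':ℝ)+1) * ∫ t in (0:ℝ)..1,
                  t^m' * (fd (m'+1) x - fd (m'+1) (z + t * (x - z))) := by
            have he : (fun t => t^m' * (fd (m'+1) x - fd (m'+1) (z + t * (x - z))))
                = fun t => t^m' * fd (m'+1) x - t^m' * fd (m'+1) (z + t * (x - z)) := by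
              funext t; ring
            rw [he, intervalIntegral.integral_sub hintC hint1, mini1, hrepm]
            field_simp
            simp_rw [mul_comm (x - z)]
          rw [gdAux_succ, if_neg hxz]
          rcases lt_or_gt_of_ne (fun h : x = z => hxz h) with hlt | hlt
          · -- x < z
            have hpt : ∀ t ∈ Set.Icc (0:ℝ) 1,
                t^m' * (fd (m'+1) x - fd (m'+1) (z + t * (x - z)))
                  ≤ t^m' * ((((m'+2))! : ℝ) * ((1-t)*(x-z))) := by
              intro t ht
              obtain ⟨ht0, ht1⟩ := ht
              have hu : z + t * (x - z) ∈ Set.Icc a b := seg_mem hzmem hx ⟨ht0, ht1⟩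
              have hxu : x ≤ z + t * (x - z) := by nlinarith
              have := hmono x hx _ hu hxu
              have harg : z + t * (x - z) - x = (1-t) * (z - x) := by ring
              rw [harg] at this
              apply mul_le_mul_of_nonneg_left _ (pow_nonneg ht0 m')
              nlinarith
            have hIle := intervalIntegral.integral_mono_on zero_le_one hint_hi hint_lo hpt
            rw [hLoval] at hIle
            rw [le_div_iff_of_neg (by linarith : x - z < 0), hsplit]
            calc ((m':ℝ)+1) * (∫ t in (0:ℝ)..1,
                  t^m' * (fd (m'+1) x - fd (m'+1) (z + t * (x - z))))
                ≤ ((m':ℝ)+1) * ((((m'+1))! : ℝ) * (x - z) / ((m':ℝ)+1)) := by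
                  apply mul_le_mul_of_nonneg_left hIle (by positivity)
            _ = (((m'+1))! : ℝ) * (x - z) := by field_simp
          · -- x > z
            have hpt : ∀ t ∈ Set.Icc (0:ℝ) 1,
                t^m' * ((((m'+2))! : ℝ) * ((1-t)*(x-z)))
                  ≤ t^m' * (fd (m'+1) x - fd (m'+1) (z + t * (x - z))) := by
              intro t ht
              obtain ⟨ht0, ht1⟩ := ht
              have hu : z + t * (x - z) ∈ Set.Icc a b := seg_mem hzmem hx ⟨ht0, ht1⟩
              have hxu : z + t * (x - z) ≤ x := by nlinarith
              have := hmono _ hu x hx hxu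
              have harg : x - (z + t * (x - z)) = (1-t) * (x - z) := by ring
              rw [harg] at this
              apply mul_le_mul_of_nonneg_left _ (pow_nonneg ht0 m')
              nlinarith
            have hIle := intervalIntegral.integral_mono_on zero_le_one hint_lo hint_hi hpt
            rw [hLoval] at hIle
            rw [le_div_iff₀ (by linarith : (0:ℝ) < x - z), hsplit]
            calc (((m'+1))! : ℝ) * (x - z)
                = ((m':ℝ)+1) * ((((m'+1))! : ℝ) * (x - z) / ((m':ℝ)+1)) := by field_simp
            _ ≤ ((m':ℝ)+1) * (∫ t in (0:ℝ)..1,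
                  t^m' * (fd (m'+1) x - fd (m'+1) (z + t * (x - z)))) := by
                  apply mul_le_mul_of_nonneg_left hIle (by positivity)
    -- apply the induction hypothesis to the divided-difference chain
    obtain ⟨s, hsmem, hs⟩ := ih a b hab (gdAux fd z) hF1 hF2
    refine ⟨Fin.cons (α := fun _ => ℝ) z s, ?_, ?_⟩
    · intro i
      rcases Fin.eq_zero_or_eq_succ i with rfl | ⟨j, rfl⟩
      · simpa using hzmem
      · simpa using hsmem j
    · intro x hx
      have hprod : (∏ i : Fin (m+1), (x - Fin.cons (α := fun _ => ℝ) z s i))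
          = (x - z) * ∏ i : Fin m, (x - s i) := by
        rw [Fin.prod_univ_succ]
        simp
      have hF3 : fd 0 x - fd 0 z = (x - z) * gdAux fd z 0 x := by
        by_cases hxz : x = z
        · subst hxz; simp
        · rw [gdAux_zero, if_neg hxz, ← mul_div_assoc,
            mul_div_cancel_left₀ _ (sub_ne_zero_of_ne hxz)]
      calc |∏ i : Fin (m+1), (x - Fin.cons (α := fun _ => ℝ) z s i)|
          = |x - z| * |∏ i : Fin m, (x - s i)| := by
            rw [hprod, abs_mul]
      _ ≤ |x - z| * |gdAux fd z 0 x| := mul_le_mul_of_nonneg_left (hs x hx) (abs_nonneg _)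
      _ = |fd 0 x - fd 0 z| := by rw [← abs_mul, ← hF3]
      _ ≤ |fd 0 x| := min_abs_fact (hcont 0 (by omega)) hzmem hzmin x hx

end auxdev

/-- If `f ∈ 𝒟ⁿ([a,b])` satisfies `f^{(n)}(t) ≥ n!` on `(a,b)`, then there is a monic polynomial
of degree `n` with all roots in `[a,b]` whose absolute value is dominated by `|f|` on `[a,b]`. -/
theorem stmt1 (n : ℕ) (hn : 1 ≤ n) (a b : ℝ) (hab : a < b)
    (fd : ℕ → ℝ → ℝ) (hf : IsDn n a b fd)
    (hderiv : ∀ t ∈ Set.Ioo a b, (n ! : ℝ) ≤ fd n t) :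
    ∃ r : Fin n → ℝ, (∀ i, r i ∈ Set.Icc a b) ∧
      ∀ x ∈ Set.Icc a b, |∏ i, (x - r i)| ≤ |fd 0 x| := by
  obtain ⟨hd1, hcont1, hd2⟩ := hf
  have hcont0 : ContinuousOn (fd 0) (Set.Icc a b) := by
    rcases eq_or_lt_of_le hn with h1 | h1
    · rw [show (0:ℕ) = n - 1 by omega]; exact hcont1
    · exact fun x hx => (hd1 0 (by omega) x hx).continuousWithinAt
  set c : ℕ → ℝ := fun j => (b - a)/((j:ℝ)+3) with hcdef
  have hcpos : ∀ j, 0 < c j := fun j => div_pos (by linarith) (by positivity)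
  have hcsmall : ∀ j, c j ≤ (b - a)/3 := by
    intro j
    apply div_le_div_of_nonneg_left (by linarith) (by norm_num)
    have : (0:ℝ) ≤ (j:ℝ) := Nat.cast_nonneg j
    linarith
  have hablt : ∀ j, a + c j < b - c j := by
    intro j; have h1 := hcsmall j; have h2 := hcpos j; linarith
  have hsubIoo : ∀ j, Set.Icc (a + c j) (b - c j) ⊆ Set.Ioo a b := by
    intro j y hy
    exact ⟨lt_of_lt_of_le (by linarith [hcpos j]) hy.1, lt_of_le_of_lt hy.2 (by linarith [hcpos j])⟩
  have hP : ∀ j : ℕ, ∃ r : Fin n → ℝ, (∀ i, r i ∈ Set.Icc (a + c j) (b - c j)) ∧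
      ∀ x ∈ Set.Icc (a + c j) (b - c j), |∏ i, (x - r i)| ≤ |fd 0 x| := by
    intro j
    apply keyP n (a + c j) (b - c j) (hablt j) fd
    · intro k hk x hx
      rcases Nat.lt_or_ge (k+1) n with h2 | h2
      · exact (hd1 k h2 x (Set.Icc_subset_Icc (by linarith [hcpos j]) (by linarith [hcpos j]) hx)).mono
          (Set.Icc_subset_Icc (by linarith [hcpos j]) (by linarith [hcpos j]))
      · have hk2 : k = n - 1 := by omega
        rw [hk2, show n - 1 + 1 = n by omega]
        exact (hd2 x (hsubIoo j hx)).hasDerivWithinAt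
    · intro x hx; exact hderiv x (hsubIoo j hx)
  choose rs hrs1 hrs2 using hP
  have hrsmem : ∀ j, rs j ∈ Set.univ.pi (fun _ : Fin n => Set.Icc a b) := by
    intro j
    rw [Set.mem_univ_pi]
    intro i
    have h := hrs1 j i
    exact ⟨by linarith [h.1, hcpos j], by linarith [h.2, hcpos j]⟩
  obtain ⟨r, hrmem, ph, hph, hlim⟩ :=
    (isCompact_univ_pi (fun _ : Fin n => isCompact_Icc)).tendsto_subseq hrsmem
  have hrmem' : ∀ i, r i ∈ Set.Icc a b := by
    rw [Set.mem_univ_pi] at hrmem; exact hrmem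
  have hc0 : Filter.Tendsto c Filter.atTop (nhds 0) := by
    apply Filter.Tendsto.div_atTop tendsto_const_nhds
    apply Filter.tendsto_atTop_add_const_right
    exact tendsto_natCast_atTop_atTop
  have hc0' : Filter.Tendsto (fun j => c (ph j)) Filter.atTop (nhds 0) := hc0.comp hph.tendsto_atTop
  have stage1 : ∀ x ∈ Set.Ioo a b, |∏ i, (x - r i)| ≤ |fd 0 x| := by
    intro x hx
    have hev1 : ∀ᶠ j in Filter.atTop, c (ph j) < x - a :=
      hc0'.eventually_lt_const (by linarith [hx.1])
    have hev2 : ∀ᶠ j in Filter.atTop, c (ph j) < b - x :=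
      hc0'.eventually_lt_const (by linarith [hx.2])
    have hev : ∀ᶠ j in Filter.atTop, |∏ i, (x - rs (ph j) i)| ≤ |fd 0 x| := by
      filter_upwards [hev1, hev2] with j h1 h2
      exact hrs2 (ph j) x ⟨by linarith, by linarith⟩
    have htd : Filter.Tendsto (fun j => |∏ i, (x - rs (ph j) i)|) Filter.atTop
        (nhds (|∏ i, (x - r i)|)) := by
      apply Filter.Tendsto.abs
      apply tendsto_finset_prod
      intro i _
      exact tendsto_const_nhds.sub ((tendsto_pi_nhds.1 hlim) i)
    exact le_of_tendsto htd hev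
  refine ⟨r, hrmem', ?_⟩
  intro x hx
  set y : ℕ → ℝ := fun t => max (a + c t) (min (b - c t) x) with hydef
  have hymem : ∀ t, y t ∈ Set.Ioo a b := by
    intro t
    constructor
    · calc a < a + c t := by linarith [hcpos t]
      _ ≤ y t := le_max_left _ _
    · apply max_lt (by linarith [hcpos t, hablt t])
      calc min (b - c t) x ≤ b - c t := min_le_left _ _
      _ < b := by linarith [hcpos t]
  have hyx : Filter.Tendsto y Filter.atTop (nhds x) := by
    have h1 : Filter.Tendsto (fun t => a + c t) Filter.atTop (nhds (a + 0)) :=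
      tendsto_const_nhds.add hc0
    have h2 : Filter.Tendsto (fun t => b - c t) Filter.atTop (nhds (b - 0)) :=
      tendsto_const_nhds.sub hc0
    have h3 := h1.max (h2.min (tendsto_const_nhds (x := x)))
    have h4 : max (a + 0) (min (b - 0) x) = x := by
      rw [add_zero, sub_zero, min_eq_right hx.2, max_eq_right hx.1]
    rwa [h4] at h3
  have h1 : Filter.Tendsto (fun t => |∏ i, (y t - r i)|) Filter.atTop
      (nhds (|∏ i, (x - r i)|)) := by
    apply Filter.Tendsto.abs; apply tendsto_finset_prod; intro i _
    exact hyx.sub_const _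
  have h2 : Filter.Tendsto (fun t => |fd 0 (y t)|) Filter.atTop (nhds (|fd 0 x|)) := by
    have hyto : Filter.Tendsto y Filter.atTop (nhdsWithin x (Set.Icc a b)) := by
      apply tendsto_nhdsWithin_of_tendsto_nhds_of_eventually_within _ hyx
      exact Filter.Eventually.of_forall (fun t => Set.Ioo_subset_Icc_self (hymem t))
    exact (Filter.Tendsto.comp ((hcont0 x hx).tendsto) hyto).abs
  exact le_of_tendsto_of_tendsto' h1 h2 (fun t => stage1 (y t) (hymem t))
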